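/- The function F_CLT(u) = log(1+u) + u/(1+u) − (1/2)·log(1+2u) − u/(1+2u) is strictly increasing on [0, ∞), satisfies F_CLT(0) = 0, and tends to +∞ as u → ∞. Consequently, for every α > 0 there is a unique u_CLT(α) > 0 with F_CLT(u_CLT(α)) = α, and hence a unique bandwidth h_CLT(α) = u_CLT(α)^{−1/2} > 0 solving F_CLT(1/h²) = α; moreover α ↦ h_CLT(α) is strictly decreasing. -/

import Mathlib

open Filter

/-- The function whose equation `F_CLT(1/h²) = α` defines the CLT-transition
bandwidth for standard Gaussian data with a Gaussian kernel. -/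
noncomputable def FCLT (u : ℝ) : ℝ :=
  Real.log (1 + u) + u / (1 + u) - (1 / 2) * Real.log (1 + 2 * u) - u / (1 + 2 * u)

lemma FCLT_hasDerivAt {x : ℝ} (hx : 0 ≤ x) :
    HasDerivAt FCLT (1/(1+x) + 1/(1+x)^2 - 1/(1+2*x) - 1/(1+2*x)^2) x := by
  have h1 : (0:ℝ) < 1 + x := by linarith
  have h2 : (0:ℝ) < 1 + 2*x := by linarith
  have d1 : HasDerivAt (fun u : ℝ => 1 + u) 1 x := by
    simpa using (hasDerivAt_id x).const_add 1
  have d2 : HasDerivAt (fun u : ℝ => 1 + 2*u) 2 x := by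
    simpa using ((hasDerivAt_id x).const_mul 2).const_add 1
  have dlog1 : HasDerivAt (fun u : ℝ => Real.log (1 + u)) (1/(1+x)) x :=
    d1.log h1.ne'
  have dlog2 : HasDerivAt (fun u : ℝ => Real.log (1 + 2*u)) (2/(1+2*x)) x :=
    d2.log h2.ne'
  have ddiv1 : HasDerivAt (fun u : ℝ => u / (1 + u))
      ((1*(1+x) - x*1)/(1+x)^2) x := (hasDerivAt_id x).div d1 h1.ne'
  have ddiv2 : HasDerivAt (fun u : ℝ => u / (1 + 2*u))
      ((1*(1+2*x) - x*2)/(1+2*x)^2) x := (hasDerivAt_id x).div d2 h2.ne'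
  have := ((dlog1.add ddiv1).sub (dlog2.const_mul (1/2))).sub ddiv2
  refine this.congr_deriv ?_
  field_simp
  ring

lemma FCLT_deriv_pos {x : ℝ} (hx : 0 < x) :
    0 < 1/(1+x) + 1/(1+x)^2 - 1/(1+2*x) - 1/(1+2*x)^2 := by
  have h1 : (0:ℝ) < 1 + x := by linarith
  have h2 : (0:ℝ) < 1 + 2*x := by linarith
  have a1 : 1/(1+2*x) < 1/(1+x) := by
    apply one_div_lt_one_div_of_lt h1; linarith
  have a2 : 1/(1+2*x)^2 < 1/(1+x)^2 := by
    apply one_div_lt_one_div_of_lt (by positivity); nlinarith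
  linarith

lemma FCLT_continuousOn : ContinuousOn FCLT (Set.Ici (0:ℝ)) := by
  have h1 : ∀ x ∈ Set.Ici (0:ℝ), (1 + x : ℝ) ≠ 0 := fun x hx => by
    have : (0:ℝ) ≤ x := hx; positivity
  have h2 : ∀ x ∈ Set.Ici (0:ℝ), (1 + 2*x : ℝ) ≠ 0 := fun x hx => by
    have : (0:ℝ) ≤ x := hx; positivity
  have c1 : ContinuousOn (fun u : ℝ => 1 + u) (Set.Ici 0) := by fun_prop
  have c2 : ContinuousOn (fun u : ℝ => 1 + 2*u) (Set.Ici 0) := by fun_prop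
  exact (((c1.log h1).add (continuousOn_id.div c1 h1)).sub
    ((c2.log h2).const_smul (1/2:ℝ))).sub (continuousOn_id.div c2 h2)

lemma FCLT_strictMonoOn : StrictMonoOn FCLT (Set.Ici (0:ℝ)) := by
  apply strictMonoOn_of_deriv_pos (convex_Ici 0) FCLT_continuousOn
  intro x hx
  rw [interior_Ici] at hx
  rw [(FCLT_hasDerivAt (le_of_lt hx)).deriv]
  exact FCLT_deriv_pos hx

lemma FCLT_zero : FCLT 0 = 0 := by simp [FCLT]

lemma FCLT_lower {u : ℝ} (hu : 0 ≤ u) :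
    (1/2) * Real.log (1+u) - (1/2) * Real.log 2 ≤ FCLT u := by
  have h1 : (0:ℝ) < 1 + u := by linarith
  have h2 : (0:ℝ) < 1 + 2*u := by linarith
  have hdiv : u / (1 + 2*u) ≤ u / (1 + u) :=
    div_le_div_of_nonneg_left hu h1 (by linarith)
  have hlog : Real.log (1 + 2*u) ≤ Real.log 2 + Real.log (1 + u) := by
    rw [← Real.log_mul (by norm_num) h1.ne']
    exact Real.log_le_log h2 (by linarith)
  unfold FCLT
  nlinarith [hlog, hdiv]

lemma FCLT_tendsto : Tendsto FCLT atTop atTop := by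
  have h1 : Tendsto (fun u : ℝ => (1/2) * Real.log (1+u) - (1/2) * Real.log 2)
      atTop atTop := by
    apply tendsto_atTop_add_const_right
    apply Tendsto.const_mul_atTop (by norm_num : (0:ℝ) < 1/2)
    exact Real.tendsto_log_atTop.comp (tendsto_atTop_add_const_left _ _ tendsto_id)
  exact tendsto_atTop_mono' _ (Filter.eventually_atTop.2 ⟨0, fun u hu => FCLT_lower hu⟩) h1

theorem clt_transition_existence_uniqueness :
    StrictMonoOn FCLT (Set.Ici (0 : ℝ))
      ∧ FCLT 0 = 0
      ∧ Tendsto FCLT atTop atTop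
      ∧ (∀ α : ℝ, 0 < α → ∃! u : ℝ, 0 < u ∧ FCLT u = α)
      ∧ (∀ α : ℝ, 0 < α → ∃! h : ℝ, 0 < h ∧ FCLT (1 / h ^ 2) = α)
      ∧ (∀ α₁ α₂ h₁ h₂ : ℝ, 0 < α₁ → α₁ < α₂ → 0 < h₁ → 0 < h₂ →
          FCLT (1 / h₁ ^ 2) = α₁ → FCLT (1 / h₂ ^ 2) = α₂ → h₂ < h₁) := by
  have hsm := FCLT_strictMonoOn
  have hmono : ∀ a b : ℝ, 0 ≤ a → a ≤ b → FCLT a ≤ FCLT b := fun a b ha hab =>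
    hsm.monotoneOn (Set.mem_Ici.2 ha) (Set.mem_Ici.2 (ha.trans hab)) hab
  -- antitone in h
  have hanti : ∀ a b : ℝ, 0 < a → a ≤ b → FCLT (1 / b ^ 2) ≤ FCLT (1 / a ^ 2) := by
    intro a b ha hab
    have hb : 0 < b := lt_of_lt_of_le ha hab
    have : 1 / b ^ 2 ≤ 1 / a ^ 2 := by
      apply one_div_le_one_div_of_le (by positivity)
      nlinarith
    exact hmono _ _ (by positivity) this
  have hex : ∀ α : ℝ, 0 < α → ∃! u : ℝ, 0 < u ∧ FCLT u = α := by
    intro α hα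
    obtain ⟨N, hN⟩ := Filter.eventually_atTop.1 (Filter.tendsto_atTop.1 FCLT_tendsto (α + 1))
    set b := max N 0 with hb
    have hb0 : (0:ℝ) ≤ b := le_max_right _ _
    have hfb : α ≤ FCLT b := by
      have := hN b (le_max_left _ _); linarith
    have hmem : α ∈ Set.Icc (FCLT 0) (FCLT b) := by
      rw [FCLT_zero]; exact ⟨hα.le, hfb⟩
    obtain ⟨u, hu, hfu⟩ := intermediate_value_Icc hb0
      (FCLT_continuousOn.mono (Set.Icc_subset_Ici_self)) hmem
    have hupos : 0 < u := by
      rcases lt_or_eq_of_le hu.1 with h | h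
      · exact h
      · exfalso; rw [← h] at hfu; rw [FCLT_zero] at hfu; linarith [hfu]
    refine ⟨u, ⟨hupos, hfu⟩, ?_⟩
    rintro v ⟨hv, hfv⟩
    exact hsm.injOn (Set.mem_Ici.2 hv.le) (Set.mem_Ici.2 hupos.le) (hfv.trans hfu.symm)
  refine ⟨hsm, FCLT_zero, FCLT_tendsto, hex, ?_, ?_⟩
  · intro α hα
    obtain ⟨u, ⟨hu, hfu⟩, huniq⟩ := hex α hα
    refine ⟨1 / Real.sqrt u, ⟨by positivity, ?_⟩, ?_⟩
    · have hs : Real.sqrt u > 0 := Real.sqrt_pos.2 hu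
      have : (1 / Real.sqrt u) ^ 2 = 1 / u := by
        rw [div_pow, one_pow, Real.sq_sqrt hu.le]
      rw [this, one_div_one_div]; exact hfu
    · rintro h ⟨hh, hfh⟩
      have h2 : 0 < 1 / h ^ 2 := by positivity
      have := huniq _ ⟨h2, hfh⟩
      have hh2 : h ^ 2 = 1 / u := by
        field_simp at this ⊢
        nlinarith [this]
      have hs : Real.sqrt u > 0 := Real.sqrt_pos.2 hu
      have : h = Real.sqrt (1 / u) := by
        rw [← hh2, Real.sqrt_sq hh.le]
      rw [this, one_div, Real.sqrt_inv, one_div]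
  · intro α₁ α₂ h₁ h₂ hα₁ hlt hh₁ hh₂ hf₁ hf₂
    by_contra hcon
    push_neg at hcon
    have := hanti h₁ h₂ hh₁ hcon
    rw [hf₁, hf₂] at this
    linarith
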